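/- Let m ≥ 1 and let p₁ ≠ p₂ be points of ℝᵐ. Let K₁, K₂ ⊆ ℝᵐ be compact sets containing 0, and let E₁, E₂ be maps defined on neighborhoods of K₁, K₂ respectively, each differentiable at 0 with Eᵢ(0) = pᵢ (in fact C¹ on a neighborhood of 0 suffices). Define the rescaled sets Aᵢ(s) = { e^s · Eᵢ(e^{−s} z) : z ∈ Kᵢ }. Then there exists s₀ such that for all s ≥ s₀, the sets A₁(s) and A₂(s) are separated by an affine hyperplane of ℝᵐ. -/

import Mathlib

open scoped RealInnerProductSpace

set_option maxHeartbeats 1000000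

/-- Rescaled images of star-shaped sets around distinct points are eventually
separated by an affine hyperplane. -/
theorem stmt_4 (m : ℕ) (hm : 1 ≤ m) (p₁ p₂ : EuclideanSpace ℝ (Fin m)) (hp : p₁ ≠ p₂)
    (K₁ K₂ : Set (EuclideanSpace ℝ (Fin m)))
    (hK₁ : IsCompact K₁) (hK₂ : IsCompact K₂) (h0₁ : (0:EuclideanSpace ℝ (Fin m)) ∈ K₁)
    (h0₂ : (0:EuclideanSpace ℝ (Fin m)) ∈ K₂)
    (E₁ E₂ : EuclideanSpace ℝ (Fin m) → EuclideanSpace ℝ (Fin m))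
    (hE₁ : DifferentiableAt ℝ E₁ 0) (hE₂ : DifferentiableAt ℝ E₂ 0)
    (hE₁0 : E₁ 0 = p₁) (hE₂0 : E₂ 0 = p₂) :
    ∃ s₀ : ℝ, ∀ s : ℝ, s₀ ≤ s →
      ∃ (v : EuclideanSpace ℝ (Fin m)) (r : ℝ), v ≠ 0 ∧
        (∀ z ∈ K₁, ⟪v, Real.exp s • E₁ (Real.exp (-s) • z)⟫ < r) ∧
        (∀ z ∈ K₂, r < ⟪v, Real.exp s • E₂ (Real.exp (-s) • z)⟫) := by
  set v : EuclideanSpace ℝ (Fin m) := p₂ - p₁ with hv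
  have hvne : v ≠ 0 := sub_ne_zero.mpr (Ne.symm hp)
  have hvnorm : (0:ℝ) < ‖v‖ := norm_pos_iff.mpr hvne
  have hvpos : (0:ℝ) < ‖v‖ ^ 2 := by positivity
  obtain ⟨C₁, hC₁pos, hC₁⟩ := (hE₁.isBigO_sub).exists_pos
  obtain ⟨C₂, hC₂pos, hC₂⟩ := (hE₂.isBigO_sub).exists_pos
  rw [Asymptotics.isBigOWith_iff, Metric.eventually_nhds_iff] at hC₁ hC₂
  obtain ⟨δ₁, hδ₁pos, hδ₁⟩ := hC₁
  obtain ⟨δ₂, hδ₂pos, hδ₂⟩ := hC₂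
  set δ : ℝ := min δ₁ δ₂ with hδ
  have hδpos : 0 < δ := lt_min hδ₁pos hδ₂pos
  obtain ⟨R₁, hR₁⟩ := hK₁.isBounded.exists_norm_le
  obtain ⟨R₂, hR₂⟩ := hK₂.isBounded.exists_norm_le
  set R : ℝ := max R₁ R₂ with hR
  have hRnn : 0 ≤ R :=
    le_trans (norm_nonneg (0:EuclideanSpace ℝ (Fin m)))
      ((hR₁ 0 h0₁).trans (le_max_left _ _))
  set C : ℝ := max C₁ C₂ with hC
  have hCpos : 0 < C := lt_of_lt_of_le hC₁pos (le_max_left _ _)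
  set B : ℝ := ‖v‖ * C * R with hB
  have hBnn : 0 ≤ B := by positivity
  refine ⟨Real.log (max (R / δ + 1) (2 * B / ‖v‖ ^ 2 + 1)), fun s hs => ?_⟩
  have hMpos : (0:ℝ) < max (R / δ + 1) (2 * B / ‖v‖ ^ 2 + 1) := by
    have : (0:ℝ) < R / δ + 1 := by positivity
    exact lt_of_lt_of_le this (le_max_left _ _)
  have hes : max (R / δ + 1) (2 * B / ‖v‖ ^ 2 + 1) ≤ Real.exp s :=
    (Real.log_le_iff_le_exp hMpos).mp hs
  have hes1 : R / δ < Real.exp s :=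
    lt_of_lt_of_le (lt_add_one _) (le_trans (le_max_left _ _) hes)
  have hes2 : 2 * B / ‖v‖ ^ 2 < Real.exp s :=
    lt_of_lt_of_le (lt_add_one _) (le_trans (le_max_right _ _) hes)
  have hexppos : 0 < Real.exp s := Real.exp_pos s
  have hRδ : R < Real.exp s * δ := by
    rw [div_lt_iff₀ hδpos] at hes1; linarith
  have hgap : B < Real.exp s * ‖v‖ ^ 2 / 2 := by
    rw [div_lt_iff₀ hvpos] at hes2; nlinarith
  have hsmall : ∀ z : EuclideanSpace ℝ (Fin m), ‖z‖ ≤ R →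
      ‖Real.exp (-s) • z‖ < δ := by
    intro z hz
    rw [norm_smul, Real.norm_eq_abs, Real.abs_exp, Real.exp_neg,
      inv_mul_lt_iff₀ hexppos]
    exact lt_of_le_of_lt hz hRδ
  have key : ∀ (E : EuclideanSpace ℝ (Fin m) → EuclideanSpace ℝ (Fin m))
      (p : EuclideanSpace ℝ (Fin m)) (C' δ' : ℝ), 0 ≤ C' → C' ≤ C → δ ≤ δ' →
      E 0 = p →
      (∀ y, dist y (0:EuclideanSpace ℝ (Fin m)) < δ' → ‖E y - E 0‖ ≤ C' * ‖y - 0‖) →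
      ∀ z : EuclideanSpace ℝ (Fin m), ‖z‖ ≤ R →
      |⟪v, Real.exp s • E (Real.exp (-s) • z)⟫ - Real.exp s * ⟪v, p⟫| ≤ B := by
    intro E p C' δ' hC'nn hC'le hδ'ge hE0 hlip z hz
    set w : EuclideanSpace ℝ (Fin m) := Real.exp (-s) • z with hw
    have hwd : dist w (0:EuclideanSpace ℝ (Fin m)) < δ' := by
      rw [dist_zero_right]
      exact lt_of_lt_of_le (hsmall z hz) hδ'ge
    have hlw : ‖E w - p‖ ≤ C' * ‖w‖ := by
      have := hlip w hwd
      rwa [hE0, sub_zero] at this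
    have hwnorm : ‖w‖ = Real.exp (-s) * ‖z‖ := by
      rw [hw, norm_smul, Real.norm_eq_abs, Real.abs_exp]
    have heq : ⟪v, Real.exp s • E w⟫ - Real.exp s * ⟪v, p⟫
        = ⟪v, Real.exp s • (E w - p)⟫ := by
      rw [real_inner_smul_right, real_inner_smul_right, inner_sub_right]; ring
    rw [heq]
    calc |⟪v, Real.exp s • (E w - p)⟫| ≤ ‖v‖ * ‖Real.exp s • (E w - p)‖ :=
          abs_real_inner_le_norm _ _
      _ = ‖v‖ * (Real.exp s * ‖E w - p‖) := by
          rw [norm_smul, Real.norm_eq_abs, Real.abs_exp]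
      _ ≤ ‖v‖ * (Real.exp s * (C' * (Real.exp (-s) * ‖z‖))) := by
          have h1 : ‖E w - p‖ ≤ C' * (Real.exp (-s) * ‖z‖) := by
            rw [← hwnorm]; exact hlw
          gcongr
      _ = ‖v‖ * (C' * ‖z‖) := by
          have : Real.exp s * (C' * (Real.exp (-s) * ‖z‖))
              = (Real.exp s * Real.exp (-s)) * (C' * ‖z‖) := by ring
          rw [this, ← Real.exp_add, add_neg_cancel, Real.exp_zero, one_mul]
      _ ≤ B := by
          rw [hB, mul_assoc]
          gcongr
  have hvv : ⟪v, p₂⟫ - ⟪v, p₁⟫ = ‖v‖ ^ 2 := by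
    rw [← inner_sub_right]
    rw [show p₂ - p₁ = v from rfl, real_inner_self_eq_norm_sq]
  refine ⟨v, Real.exp s * ⟪v, p₁⟫ + Real.exp s * ‖v‖ ^ 2 / 2, hvne, ?_, ?_⟩
  · intro z hz
    have h := key E₁ p₁ C₁ δ₁ (le_of_lt hC₁pos) (le_max_left _ _)
      (min_le_left _ _) hE₁0 hδ₁ z ((hR₁ z hz).trans (le_max_left _ _))
    obtain ⟨h1, h2⟩ := abs_le.mp h
    linarith
  · intro z hz
    have h := key E₂ p₂ C₂ δ₂ (le_of_lt hC₂pos) (le_max_right _ _)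
      (min_le_right _ _) hE₂0 hδ₂ z ((hR₂ z hz).trans (le_max_right _ _))
    obtain ⟨h1, h2⟩ := abs_le.mp h
    nlinarith
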